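/- Let α, ε > 0 and ρ_{α,ε}(ℓ) = (1 - e^{-αℓ})/(1 - e^{-αε}). For any c₀ > 0, if 1 - e^{-αε} ≥ c₀ then there exists C > 0 (depending only on c₀) such that ∫₀^ε e^{αℓ} |∂_α ρ_{α,ε}(ℓ)|² dℓ ≤ C (α^{-3} + e^{-αε} ε² α^{-1}). -/

import Mathlib

open MeasureTheory

private lemma aux_ineq (a d ε : ℝ) (ha : 0 ≤ a) (hd : 0 ≤ d) (hε : 0 ≤ ε) :
    2 * ((-a * ε ^ 2 + -(2 * a ^ 2) * ε + -(2 * a ^ 3)) * d + ε ^ 2 * d * a) -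
      2 * (-(2 * a ^ 3) + ε ^ 2 * d ^ 2 * a) ≤ 4 * (a ^ 3 + d * ε ^ 2 * a) := by
  nlinarith [mul_nonneg (mul_nonneg hε (pow_nonneg ha 2)) hd,
    mul_nonneg (pow_nonneg ha 3) hd,
    mul_nonneg (mul_nonneg (pow_nonneg hε 2) (pow_nonneg hd 2)) ha,
    mul_nonneg (mul_nonneg hd (pow_nonneg hε 2)) ha]

/-- Bound on `∫₀^ε e^{αℓ} |∂_α ρ_{α,ε}|² dℓ` when `1 - e^{-αε} ≥ c₀`. -/
theorem deriv_alpha_bound (c0 : ℝ) (hc0 : 0 < c0) :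
    ∃ C > 0, ∀ α ε : ℝ, 0 < α → 0 < ε → c0 ≤ 1 - Real.exp (-α * ε) →
      (∫ ℓ in (0:ℝ)..ε, Real.exp (α * ℓ) *
          (((1 - Real.exp (-α * ε)) ^ 2)⁻¹ *
            (ℓ * Real.exp (-α * ℓ) * (1 - Real.exp (-α * ε)) -
              (1 - Real.exp (-α * ℓ)) * ε * Real.exp (-α * ε))) ^ 2)
        ≤ C * (α⁻¹ ^ 3 + Real.exp (-α * ε) * ε ^ 2 * α⁻¹) := by
  refine ⟨4 / c0 ^ 4, by positivity, ?_⟩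
  intro α ε hα hε hc
  have hα' : (α : ℝ) ≠ 0 := ne_of_gt hα
  set d : ℝ := Real.exp (-α * ε) with hd
  clear_value d
  have hdpos : 0 < d := by rw [hd]; exact Real.exp_pos _
  have hDpos : 0 < 1 - d := lt_of_lt_of_le hc0 hc
  have hd1 : d < 1 := by linarith
  -- the majorant
  set g : ℝ → ℝ := fun ℓ =>
    2 / c0 ^ 4 * (ℓ ^ 2 * Real.exp (-α * ℓ) + ε ^ 2 * d ^ 2 * Real.exp (α * ℓ)) with hg
  -- antiderivative of the majorant
  set H : ℝ → ℝ := fun ℓ =>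
    2 / c0 ^ 4 * ((-α⁻¹ * ℓ ^ 2 + -(2 * α⁻¹ ^ 2) * ℓ + -(2 * α⁻¹ ^ 3)) * Real.exp (-α * ℓ)
      + ε ^ 2 * d ^ 2 * α⁻¹ * Real.exp (α * ℓ)) with hH
  have hder : ∀ ℓ : ℝ, HasDerivAt H (g ℓ) ℓ := by
    intro ℓ
    have h1 : HasDerivAt (fun x : ℝ => Real.exp (-α * x)) (-α * Real.exp (-α * ℓ)) ℓ := by
      simpa [mul_comm] using ((hasDerivAt_id ℓ).const_mul (-α)).exp
    have h2 : HasDerivAt (fun x : ℝ => Real.exp (α * x)) (α * Real.exp (α * ℓ)) ℓ := by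
      simpa [mul_comm] using ((hasDerivAt_id ℓ).const_mul α).exp
    have h3 : HasDerivAt (fun x : ℝ => -α⁻¹ * x ^ 2 + -(2 * α⁻¹ ^ 2) * x + -(2 * α⁻¹ ^ 3))
        (-α⁻¹ * (2 * ℓ ^ 1) + -(2 * α⁻¹ ^ 2) * 1) ℓ := by
      have hx2 : HasDerivAt (fun x : ℝ => x ^ 2) ((2 : ℕ) * ℓ ^ 1) ℓ := by
        exact_mod_cast hasDerivAt_pow 2 ℓ
      exact ((hx2.const_mul (-α⁻¹)).add ((hasDerivAt_id' ℓ).const_mul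
        (-(2 * α⁻¹ ^ 2)))).add_const (-(2 * α⁻¹ ^ 3))
    have h4 := (h3.mul h1).add (h2.const_mul (ε ^ 2 * d ^ 2 * α⁻¹))
    have h5 := h4.const_mul (2 / c0 ^ 4)
    refine h5.congr_deriv ?_
    simp only [hg]
    field_simp
    ring
  have hcont_g : Continuous g := by fun_prop
  have hint_g : IntervalIntegrable g volume 0 ε := hcont_g.intervalIntegrable _ _
  have hcont_f : Continuous (fun ℓ : ℝ => Real.exp (α * ℓ) *
      (((1 - d) ^ 2)⁻¹ *
        (ℓ * Real.exp (-α * ℓ) * (1 - d) -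
          (1 - Real.exp (-α * ℓ)) * ε * d)) ^ 2) := by fun_prop
  have hmono : (∫ ℓ in (0:ℝ)..ε, Real.exp (α * ℓ) *
      (((1 - d) ^ 2)⁻¹ *
        (ℓ * Real.exp (-α * ℓ) * (1 - d) -
          (1 - Real.exp (-α * ℓ)) * ε * d)) ^ 2) ≤ ∫ ℓ in (0:ℝ)..ε, g ℓ := by
    apply intervalIntegral.integral_mono_on hε.le (hcont_f.intervalIntegrable _ _) hint_g
    intro ℓ hℓ
    obtain ⟨hℓ0, hℓε⟩ := hℓ
    set e : ℝ := Real.exp (-α * ℓ) with he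
    set E : ℝ := Real.exp (α * ℓ) with hE
    have hepos : 0 < e := Real.exp_pos _
    have hEpos : 0 < E := Real.exp_pos _
    have hEe : E * e = 1 := by
      rw [hE, he, ← Real.exp_add]
      norm_num
    have he1 : e ≤ 1 := by
      calc e = Real.exp (-α * ℓ) := he
        _ ≤ Real.exp 0 := Real.exp_le_exp.mpr (by nlinarith)
        _ = 1 := Real.exp_zero
    set X : ℝ := ℓ * e * (1 - d) - (1 - e) * ε * d with hX
    have hXsq : X ^ 2 ≤ 2 * (ℓ ^ 2 * e ^ 2) + 2 * (ε ^ 2 * d ^ 2) := by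
      have ha : (ℓ * e * (1 - d)) ^ 2 ≤ ℓ ^ 2 * e ^ 2 := by
        have h1 : (1 - d) ^ 2 ≤ 1 := by nlinarith
        nlinarith [sq_nonneg (ℓ * e)]
      have hb : ((1 - e) * ε * d) ^ 2 ≤ ε ^ 2 * d ^ 2 := by
        have h1 : (1 - e) ^ 2 ≤ 1 := by nlinarith
        nlinarith [sq_nonneg (ε * d)]
      rw [hX]
      nlinarith [sq_nonneg (ℓ * e * (1 - d) + (1 - e) * ε * d), ha, hb]
    have hinv : (((1 - d) ^ 2)⁻¹) ^ 2 ≤ (c0 ^ 4)⁻¹ := by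
      have heq : (((1 - d) ^ 2)⁻¹) ^ 2 = ((1 - d) ^ 4)⁻¹ := by
        rw [inv_pow, ← pow_mul]
      rw [heq]
      exact inv_anti₀ (by positivity) (pow_le_pow_left₀ hc0.le hc 4)
    have step1 : E * (((1 - d) ^ 2)⁻¹ * X) ^ 2
        ≤ E * ((c0 ^ 4)⁻¹ * (2 * (ℓ ^ 2 * e ^ 2) + 2 * (ε ^ 2 * d ^ 2))) := by
      apply mul_le_mul_of_nonneg_left _ hEpos.le
      rw [mul_pow]
      have hXnn : 0 ≤ X ^ 2 := sq_nonneg _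
      calc (((1 - d) ^ 2)⁻¹) ^ 2 * X ^ 2 ≤ (c0 ^ 4)⁻¹ * X ^ 2 := by
            apply mul_le_mul_of_nonneg_right hinv hXnn
        _ ≤ (c0 ^ 4)⁻¹ * (2 * (ℓ ^ 2 * e ^ 2) + 2 * (ε ^ 2 * d ^ 2)) := by
            apply mul_le_mul_of_nonneg_left hXsq (by positivity)
    have step2 : E * ((c0 ^ 4)⁻¹ * (2 * (ℓ ^ 2 * e ^ 2) + 2 * (ε ^ 2 * d ^ 2))) = g ℓ := by
      simp only [hg, ← he, ← hE]
      have hc4 : c0 ^ 4 ≠ 0 := by positivity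
      field_simp
      linear_combination (ℓ ^ 2 * e) * hEe
    calc E * (((1 - d) ^ 2)⁻¹ * X) ^ 2
        ≤ E * ((c0 ^ 4)⁻¹ * (2 * (ℓ ^ 2 * e ^ 2) + 2 * (ε ^ 2 * d ^ 2))) := step1
      _ = g ℓ := step2
  have hcalc : (∫ ℓ in (0:ℝ)..ε, g ℓ) = H ε - H 0 := by
    exact intervalIntegral.integral_eq_sub_of_hasDerivAt (fun ℓ _ => hder ℓ) hint_g
  have hE1d : Real.exp (α * ε) * d = 1 := by
    rw [hd, ← Real.exp_add]
    norm_num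
  have hfinal : H ε - H 0 ≤ 4 / c0 ^ 4 * (α⁻¹ ^ 3 + d * ε ^ 2 * α⁻¹) := by
    have hHε : H ε = 2 / c0 ^ 4 * ((-α⁻¹ * ε ^ 2 + -(2 * α⁻¹ ^ 2) * ε + -(2 * α⁻¹ ^ 3)) * d
        + ε ^ 2 * d ^ 2 * α⁻¹ * Real.exp (α * ε)) := by
      simp only [hH]
      rw [← hd]
    have hH0 : H 0 = 2 / c0 ^ 4 * (-(2 * α⁻¹ ^ 3) + ε ^ 2 * d ^ 2 * α⁻¹) := by
      simp only [hH]
      norm_num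
    have hkey : ε ^ 2 * d ^ 2 * α⁻¹ * Real.exp (α * ε) = ε ^ 2 * d * α⁻¹ := by
      linear_combination (ε ^ 2 * α⁻¹ * d) * hE1d
    rw [hHε, hH0, hkey]
    have hc4 : (0:ℝ) < c0 ^ 4 := by positivity
    rw [div_mul_eq_mul_div, div_mul_eq_mul_div, div_mul_eq_mul_div, ← sub_div,
      div_le_div_iff_of_pos_right hc4]
    exact aux_ineq α⁻¹ d ε (by positivity) hdpos.le hε.le
  calc (∫ ℓ in (0:ℝ)..ε, Real.exp (α * ℓ) *
      (((1 - d) ^ 2)⁻¹ *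
        (ℓ * Real.exp (-α * ℓ) * (1 - d) -
          (1 - Real.exp (-α * ℓ)) * ε * d)) ^ 2)
      ≤ ∫ ℓ in (0:ℝ)..ε, g ℓ := hmono
    _ = H ε - H 0 := hcalc
    _ ≤ 4 / c0 ^ 4 * (α⁻¹ ^ 3 + d * ε ^ 2 * α⁻¹) := hfinal
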